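/- Let (X, F, μ, f) be an invertible measure-preserving transformation of a probability space, and let φ : X → ℝ be measurable such that either (φ∘f − φ)^+ or (φ∘f − φ)^− is integrable. Then (1/|n|) φ(f^n x) → 0 as n → +∞ and as n → −∞, for μ-almost every x. -/

import Mathlib

open MeasureTheory Filter Metric Module Submodule Set

noncomputable section

namespace BY

variable {B B' : Type*}

/-- The unit sphere of a subspace `E`. -/
def subSphere [NormedAddCommGroup B] [NormedSpace ℝ B] (E : Submodule ℝ B) : Set B :=
  {v : B | v ∈ E ∧ ‖v‖ = 1}

/-- `d_H(E, E')`: the Hausdorff distance between the unit spheres of `E` and `E'`. -/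
def dH [NormedAddCommGroup B] [NormedSpace ℝ B] (E E' : Submodule ℝ B) : ℝ :=
  Metric.hausdorffDist (subSphere E) (subSphere E')

/-- The supremum of `‖π x‖` over `x ∈ S`, where `π` is the projection onto `E` along `F`. -/
def projNormOn [NormedAddCommGroup B] [NormedSpace ℝ B] (E F : Submodule ℝ B)
    (h : IsCompl E F) (S : Set B) : ℝ :=
  sSup ((fun x => ‖(E.linearProjOfIsCompl F h x : B)‖) '' S)

/-- `|π_{E⊕F}|`: the operator norm of the projection onto `E` along `F`. -/
def projNorm [NormedAddCommGroup B] [NormedSpace ℝ B] (E F : Submodule ℝ B)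
    (h : IsCompl E F) : ℝ :=
  projNormOn E F h (Metric.closedBall 0 1)

/-- `α(E, F) = inf { ‖e - f‖ : e ∈ E, ‖e‖ = 1, f ∈ F }`. -/
def alphaAngle [NormedAddCommGroup B] [NormedSpace ℝ B] (E F : Submodule ℝ B) : ℝ :=
  sInf {r : ℝ | ∃ e ∈ E, ∃ f ∈ F, ‖e‖ = 1 ∧ r = ‖e - f‖}

/-- `ω_k`: the volume of the Euclidean unit ball in `ℝ^k`. -/
def euclideanBallVol (k : ℕ) : ENNReal :=
  volume (Metric.closedBall (0 : EuclideanSpace ℝ (Fin k)) 1)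

/-- `μ` is the induced volume `m_E` on the `k`-dimensional subspace `E`: the (unique) Haar
measure on `E` assigning mass `ω_k` to the unit ball of `E`. -/
def IsInducedVolume [NormedAddCommGroup B] [NormedSpace ℝ B] [MeasurableSpace B]
    (E : Submodule ℝ B) (k : ℕ) (μ : Measure E) : Prop :=
  Measure.IsAddHaarMeasure μ ∧ μ {v : E | ‖v‖ ≤ 1} = euclideanBallVol k

/-- `det(A|E)`, computed with respect to induced volumes `μE` on `E` and `μF` on a
subspace `F` containing `A(E)`: the ratio `μF(A(B_E)) / μE(B_E)` where `B_E` is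
the unit ball of `E`. -/
def detIn [NormedAddCommGroup B] [NormedSpace ℝ B] [NormedAddCommGroup B'] [NormedSpace ℝ B']
    [MeasurableSpace B] [MeasurableSpace B']
    (A : B →L[ℝ] B') (E : Submodule ℝ B) (F : Submodule ℝ B')
    (μE : Measure E) (μF : Measure F) : ℝ :=
  (μF {w : F | ∃ v : B, v ∈ E ∧ ‖v‖ ≤ 1 ∧ A v = (w : B')}).toReal /
    (μE {v : E | ‖v‖ ≤ 1}).toReal

/-- `P[v₁, …, v_k]`: the parallelepiped spanned by the vectors `v i`. -/
def pped [AddCommGroup B] [Module ℝ B] {k : ℕ} (v : Fin k → B) : Set B :=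
  {x : B | ∃ a : Fin k → ℝ, (∀ i, a i ∈ Set.Icc (0 : ℝ) 1) ∧ x = ∑ i, a i • v i}

/-- `N[v₁, …, v_k]`: the sum of the norms of the projections, within the span of the `v i`,
onto each `⟨v i⟩` along the span of the other basis vectors. -/
def Nquan [NormedAddCommGroup B] [NormedSpace ℝ B] {k : ℕ} (v : Fin k → B) : ℝ :=
  ∑ i, sSup {r : ℝ | ∃ a : Fin k → ℝ, ‖∑ j, a j • v j‖ ≤ 1 ∧ r = ‖a i • v i‖}

/-- The operator norm of the restriction of `A` to the subspace `E`. -/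
def opNormOnSub [NormedAddCommGroup B] [NormedSpace ℝ B] [NormedAddCommGroup B']
    [NormedSpace ℝ B'] (A : B →L[ℝ] B') (E : Submodule ℝ B) : ℝ :=
  sSup {r : ℝ | ∃ v ∈ E, ‖v‖ ≤ 1 ∧ r = ‖A v‖}

/-- The `n`-th iterate (`n ∈ ℤ`) of the invertible pair `(f, g)`, `g = f⁻¹`. -/
def zIter {X : Type*} (f g : X → X) (n : ℤ) (x : X) : X :=
  if 0 ≤ n then f^[n.toNat] x else g^[(-n).toNat] x

/-- `ψ'(x) = sup_{n ∈ ℤ} e^{-|n| δ} ψ(f^n x)`. -/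
def psiSup {X : Type*} (f g : X → X) (ψ : X → ℝ) (δ : ℝ) (x : X) : ℝ :=
  sSup (Set.range fun n : ℤ => Real.exp (-|(n : ℝ)| * δ) * ψ (zIter f g n x))

/-- The cocycle `T^n_x = T_{f^{n-1} x} ∘ ⋯ ∘ T_x`. -/
def cocycle {X : Type*} [NormedAddCommGroup B] [NormedSpace ℝ B]
    (f : X → X) (T : X → B →L[ℝ] B) : ℕ → X → B →L[ℝ] B
  | 0, _ => ContinuousLinearMap.id ℝ B
  | n + 1, x => (cocycle f T n (f x)).comp (T x)

end BY

end

section Statement15Aux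

namespace St15


/-- truncation to `[-M, M]` -/
def trunc (M : ℕ) (a : ℝ) : ℝ := max (min a M) (-(M : ℝ))

lemma trunc_sub_le (M : ℕ) (a b : ℝ) : trunc M a - trunc M b ≤ max (a - b) 0 := by
  unfold trunc
  rcases le_total a b with h | h <;>
    simp only [max_def, min_def] <;> split_ifs <;> simp <;> linarith

lemma abs_trunc_sub_trunc (M : ℕ) (a b : ℝ) : |trunc M a - trunc M b| ≤ |a - b| := by
  have h1 := trunc_sub_le M a b
  have h2 := trunc_sub_le M b a
  rw [abs_le]
  constructor
  · rcases le_total (b - a) 0 with h | h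
    · simp [max_eq_right h] at h2; rw [abs_sub_comm]; rcases abs_cases (b - a) with ⟨e, _⟩ | ⟨e, _⟩ <;> linarith
    · rw [max_eq_left h] at h2; rw [abs_sub_comm]; rcases abs_cases (b - a) with ⟨e, _⟩ | ⟨e, _⟩ <;> linarith
  · rcases le_total (a - b) 0 with h | h
    · simp [max_eq_right h] at h1; rcases abs_cases (a - b) with ⟨e, _⟩ | ⟨e, _⟩ <;> linarith
    · rw [max_eq_left h] at h1; rcases abs_cases (a - b) with ⟨e, _⟩ | ⟨e, _⟩ <;> linarith

lemma abs_trunc_le (M : ℕ) (a : ℝ) : |trunc M a| ≤ M := by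
  unfold trunc
  rw [abs_le]
  constructor
  · exact le_max_right _ _
  · rcases le_total a (M:ℝ) with h | h <;> simp [max_def, min_def] <;> split_ifs <;> linarith

lemma trunc_eq (M : ℕ) (a : ℝ) (h : |a| ≤ M) : trunc M a = a := by
  rw [abs_le] at h
  unfold trunc
  rw [min_eq_left h.2, max_eq_left h.1]

lemma trunc_measurable (M : ℕ) : Measurable (trunc M) :=
  ((measurable_id.min measurable_const).max measurable_const)



variable {X : Type*} [MeasurableSpace X] {μ : MeasureTheory.Measure X}

/-- Birkhoff sum -/
def Sb (f : X → X) (h : X → ℝ) (n : ℕ) (x : X) : ℝ := ∑ i ∈ Finset.range n, h (f^[i] x)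

lemma Sb_succ' (f : X → X) (h : X → ℝ) (n : ℕ) (x : X) :
    Sb f h (n + 1) x = h x + Sb f h n (f x) := by
  unfold Sb
  rw [Finset.sum_range_succ']
  simp [Function.iterate_succ_apply, add_comm]

lemma Sb_telescope (f : X → X) (φ : X → ℝ) (n : ℕ) (x : X) :
    Sb f (fun y => φ (f y) - φ y) n x = φ (f^[n] x) - φ x := by
  induction n with
  | zero => simp [Sb]
  | succ n ih =>
      unfold Sb at *
      rw [Finset.sum_range_succ, ih, Function.iterate_succ_apply']
      ring

lemma Sb_measurable {f : X → X} {h : X → ℝ} (hf : Measurable f) (hh : Measurable h) (n : ℕ) :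
    Measurable (Sb f h n) :=
  Finset.measurable_sum _ (fun i _ => hh.comp (hf.iterate i))

lemma Sb_neg (f : X → X) (h : X → ℝ) (n : ℕ) (x : X) :
    Sb f (fun y => -h y) n x = -Sb f h n x := by
  simp [Sb]

/-- maximal function -/
def Mx (f : X → X) (h : X → ℝ) : ℕ → X → ℝ
  | 0 => fun _ => 0
  | n + 1 => fun x => max (h x + Mx f h n (f x)) 0

lemma Mx_nonneg (f : X → X) (h : X → ℝ) (n : ℕ) (x : X) : 0 ≤ Mx f h n x := by
  cases n with
  | zero => simp [Mx]
  | succ n => exact le_max_right _ _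

lemma Mx_measurable {f : X → X} {h : X → ℝ} (hf : Measurable f) (hh : Measurable h) (n : ℕ) :
    Measurable (Mx f h n) := by
  induction n with
  | zero => exact measurable_const
  | succ n ih => exact (hh.add (ih.comp hf)).max measurable_const

lemma Mx_integrable {f : X → X} {h : X → ℝ} (hf : Measurable f)
    (hpres : MeasurePreserving f μ μ) (hh : Measurable h) (hint : Integrable h μ)
    [IsFiniteMeasure μ] (n : ℕ) : Integrable (Mx f h n) μ := by
  induction n with
  | zero => exact integrable_const 0
  | succ n ih =>
      have hcomp : Integrable (fun x => Mx f h n (f x)) μ :=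
        (hpres.integrable_comp ih.1).mpr ih
      exact (hint.add hcomp).pos_part

lemma Mx_mono {f : X → X} {h : X → ℝ} (n : ℕ) : ∀ x, Mx f h n x ≤ Mx f h (n + 1) x := by
  induction n with
  | zero => intro x; exact Mx_nonneg f h 1 x
  | succ n ih =>
      intro x
      exact max_le_max (by linarith [ih (f x)]) le_rfl

lemma Mx_mono' {f : X → X} {h : X → ℝ} {k n : ℕ} (hkn : k ≤ n) (x : X) :
    Mx f h k x ≤ Mx f h n x := by
  induction n with
  | zero => simp_all
  | succ n ih =>
      rcases Nat.lt_or_ge k (n + 1) with hl | hl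
      · exact le_trans (ih (by omega)) (Mx_mono n x)
      · have : k = n + 1 := by omega
        subst this; rfl

lemma Sb_le_Mx {f : X → X} {h : X → ℝ} (n : ℕ) : ∀ x, Sb f h n x ≤ Mx f h n x := by
  induction n with
  | zero => intro x; simp [Sb, Mx]
  | succ n ih =>
      intro x
      rw [Sb_succ']
      exact le_trans (by linarith [ih (f x)]) (le_max_left _ _)

lemma Sb_le_Mx' {f : X → X} {h : X → ℝ} {k n : ℕ} (hkn : k ≤ n) (x : X) :
    Sb f h k x ≤ Mx f h n x :=
  le_trans (Sb_le_Mx k x) (Mx_mono' hkn x)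

lemma integral_comp_mp {f : X → X} (hpres : MeasurePreserving f μ μ)
    {u : X → ℝ} (hu : AEStronglyMeasurable u μ) :
    ∫ x, u (f x) ∂μ = ∫ x, u x ∂μ := by
  have h1 : ∫ x, u x ∂(MeasureTheory.Measure.map f μ) = ∫ x, u (f x) ∂μ :=
    MeasureTheory.integral_map hpres.measurable.aemeasurable (by rw [hpres.map_eq]; exact hu)
  rw [hpres.map_eq] at h1
  exact h1.symm

/-- Garsia's maximal ergodic inequality -/
lemma garsia {f : X → X} {h : X → ℝ} (hf : Measurable f)
    (hpres : MeasurePreserving f μ μ) (hh : Measurable h) (hint : Integrable h μ)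
    [IsFiniteMeasure μ] (n : ℕ) :
    0 ≤ ∫ x in {x | 0 < Mx f h n x}, h x ∂μ := by
  set G := {x | 0 < Mx f h n x} with hG
  have hGm : MeasurableSet G := measurableSet_lt measurable_const (Mx_measurable hf hh n)
  have hMint : Integrable (Mx f h n) μ := Mx_integrable hf hpres hh hint n
  have hMcomp : Integrable (fun x => Mx f h n (f x)) μ :=
    (hpres.integrable_comp hMint.1).mpr hMint
  -- pointwise : on G, Mx n x - Mx n (f x) ≤ h x
  have key : ∀ x ∈ G, Mx f h n x - Mx f h n (f x) ≤ h x := by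
    intro x hx
    rw [hG, Set.mem_setOf_eq] at hx
    cases n with
    | zero => simp [Mx] at hx
    | succ n =>
        have hx' : 0 < max (h x + Mx f h n (f x)) 0 := hx
        have h1 : Mx f h (n+1) x = h x + Mx f h n (f x) := by
          show max (h x + Mx f h n (f x)) 0 = _
          rcases max_cases (h x + Mx f h n (f x)) 0 with ⟨he, _⟩ | ⟨he, _⟩
          · exact he
          · exact absurd (he ▸ hx') (lt_irrefl 0)
        rw [h1]
        have := Mx_mono (f := f) (h := h) n (f x)
        linarith
  have step1 : ∫ x in G, (Mx f h n x - Mx f h n (f x)) ∂μ ≤ ∫ x in G, h x ∂μ := by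
    apply setIntegral_mono_on (hMint.integrableOn.sub hMcomp.integrableOn)
      hint.integrableOn hGm key
  have e1 : ∫ x in G, (Mx f h n x - Mx f h n (f x)) ∂μ
      = ∫ x in G, Mx f h n x ∂μ - ∫ x in G, Mx f h n (f x) ∂μ :=
    integral_sub hMint.integrableOn hMcomp.integrableOn
  have e2 : ∫ x in G, Mx f h n x ∂μ = ∫ x, Mx f h n x ∂μ := by
    rw [← integral_indicator hGm]
    congr 1
    funext x
    by_cases hx : x ∈ G
    · simp [hx]
    · have : Mx f h n x = 0 := by
        have h0 := Mx_nonneg f h n x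
        simp only [hG, Set.mem_setOf_eq, not_lt] at hx
        linarith
      simp [hx, this]
  have e3 : ∫ x in G, Mx f h n (f x) ∂μ ≤ ∫ x, Mx f h n (f x) ∂μ := by
    apply setIntegral_le_integral hMcomp
    exact Eventually.of_forall (fun x => Mx_nonneg f h n (f x))
  have e4 : ∫ x, Mx f h n (f x) ∂μ = ∫ x, Mx f h n x ∂μ :=
    integral_comp_mp hpres hMint.1
  linarith


lemma integral_trunc_cobdy {X : Type*} [MeasurableSpace X] {μ : MeasureTheory.Measure X}
    [IsProbabilityMeasure μ] {f : X → X} {φ : X → ℝ}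
    (hf : Measurable f) (hpres : MeasurePreserving f μ μ) (hφ : Measurable φ) (M : ℕ) :
    ∫ x, (trunc M (φ (f x)) - trunc M (φ x)) ∂μ = 0 := by
  have hm : Measurable (fun x => trunc M (φ x)) := (trunc_measurable M).comp hφ
  have hb : Integrable (fun x => trunc M (φ x)) μ := by
    apply Integrable.mono' (integrable_const (M : ℝ)) hm.aestronglyMeasurable
    exact Eventually.of_forall (fun x => by simpa using abs_trunc_le M (φ x))
  have hbf : Integrable (fun x => trunc M (φ (f x))) μ :=
    (hpres.integrable_comp hb.1).mpr hb
  rw [integral_sub hbf hb, integral_comp_mp hpres hb.1, sub_self]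

/-- Lemma 1: the coboundary is integrable if its positive part is -/
lemma integrable_cobdy {X : Type*} [MeasurableSpace X] {μ : MeasureTheory.Measure X}
    [IsProbabilityMeasure μ] {f : X → X} {φ : X → ℝ}
    (hf : Measurable f) (hpres : MeasurePreserving f μ μ) (hφ : Measurable φ)
    (hplus : Integrable (fun x => max (φ (f x) - φ x) 0) μ) :
    Integrable (fun x => φ (f x) - φ x) μ := by
  set ψ := fun x => φ (f x) - φ x with hψ
  have hψm : Measurable ψ := (hφ.comp hf).sub hφ
  set d := fun (M : ℕ) (x : X) => trunc M (φ (f x)) - trunc M (φ x) with hd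
  have hdm : ∀ M, Measurable (d M) :=
    fun M => ((trunc_measurable M).comp (hφ.comp hf)).sub ((trunc_measurable M).comp hφ)
  have hdint : ∀ M, Integrable (d M) μ := by
    intro M
    apply Integrable.mono' (integrable_const (2 * (M : ℝ))) (hdm M).aestronglyMeasurable
    refine Eventually.of_forall (fun x => ?_)
    have h1 := abs_trunc_le M (φ (f x))
    have h2 := abs_trunc_le M (φ x)
    simp only [Real.norm_eq_abs, hd]
    rcases abs_cases (trunc M (φ (f x)) - trunc M (φ x)) with ⟨e, _⟩ | ⟨e, _⟩ <;>
      rcases abs_cases (trunc M (φ (f x))) with ⟨e1, _⟩ | ⟨e1, _⟩ <;>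
      rcases abs_cases (trunc M (φ x)) with ⟨e2, _⟩ | ⟨e2, _⟩ <;> linarith
  have hdzero : ∀ M, ∫ x, d M x ∂μ = 0 := fun M => integral_trunc_cobdy hf hpres hφ M
  -- positive and negative parts
  have hdpos : ∀ M, Integrable (fun x => max (d M x) 0) μ := fun M => (hdint M).pos_part
  have hdneg : ∀ M, Integrable (fun x => max (-(d M x)) 0) μ := fun M => (hdint M).neg.pos_part
  have hsplit : ∀ M, ∫ x, max (-(d M x)) 0 ∂μ = ∫ x, max (d M x) 0 ∂μ := by
    intro M
    have : ∀ x, max (d M x) 0 - max (-(d M x)) 0 = d M x := fun x => max_zero_sub_eq_self _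
    have h1 : ∫ x, (max (d M x) 0 - max (-(d M x)) 0) ∂μ = 0 := by
      rw [show (fun x => max (d M x) 0 - max (-(d M x)) 0) = d M from funext this] at *
      exact hdzero M
    rw [integral_sub (hdpos M) (hdneg M)] at h1
    linarith
  have hpos_le : ∀ M, ∫ x, max (d M x) 0 ∂μ ≤ ∫ x, max (ψ x) 0 ∂μ := by
    intro M
    apply integral_mono (hdpos M) hplus
    intro x
    exact max_le (trunc_sub_le M _ _) (le_max_right _ _)
  -- Fatou for the negative part
  have hneg_meas : Measurable (fun x => max (-(ψ x)) 0) := hψm.neg.max measurable_const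
  have hfatou : ∫⁻ x, ENNReal.ofReal (max (-(ψ x)) 0) ∂μ ≤
      ENNReal.ofReal (∫ x, max (ψ x) 0 ∂μ) := by
    have hptw : ∀ x, Tendsto (fun M : ℕ => ENNReal.ofReal (max (-(d M x)) 0)) atTop
        (nhds (ENNReal.ofReal (max (-(ψ x)) 0))) := by
      intro x
      apply tendsto_atTop_of_eventually_const (i₀ := ⌈max |φ x| |φ (f x)|⌉₊)
      intro M hM
      have h1 : |φ x| ≤ M := le_trans (le_max_left _ _) (le_trans (Nat.le_ceil _) (by exact_mod_cast hM))
      have h2 : |φ (f x)| ≤ M := le_trans (le_max_right _ _) (le_trans (Nat.le_ceil _) (by exact_mod_cast hM))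
      simp [hd, trunc_eq M _ h1, trunc_eq M _ h2, hψ]
    have hliminf : ∀ x, Filter.liminf (fun M : ℕ => ENNReal.ofReal (max (-(d M x)) 0)) atTop
        = ENNReal.ofReal (max (-(ψ x)) 0) := fun x => (hptw x).liminf_eq
    calc ∫⁻ x, ENNReal.ofReal (max (-(ψ x)) 0) ∂μ
        = ∫⁻ x, Filter.liminf (fun M : ℕ => ENNReal.ofReal (max (-(d M x)) 0)) atTop ∂μ := by
          apply lintegral_congr; intro x; rw [hliminf x]
      _ ≤ Filter.liminf (fun M : ℕ => ∫⁻ x, ENNReal.ofReal (max (-(d M x)) 0) ∂μ) atTop :=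
          lintegral_liminf_le (fun M => ((hdm M).neg.max measurable_const).ennreal_ofReal)
      _ ≤ ENNReal.ofReal (∫ x, max (ψ x) 0 ∂μ) := by
          have hterm : ∀ M : ℕ, ∫⁻ x, ENNReal.ofReal (max (-(d M x)) 0) ∂μ
              ≤ ENNReal.ofReal (∫ x, max (ψ x) 0 ∂μ) := by
            intro M
            rw [← ofReal_integral_eq_lintegral_ofReal (hdneg M)
              (Eventually.of_forall fun x => le_max_right _ _)]
            exact ENNReal.ofReal_le_ofReal (le_trans (le_of_eq (hsplit M)) (hpos_le M))
          exact le_trans liminf_le_limsup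
            (limsup_le_of_le (by isBoundedDefault) (Eventually.of_forall hterm))
  have hnegint : Integrable (fun x => max (-(ψ x)) 0) μ := by
    refine ⟨hneg_meas.aestronglyMeasurable, ?_⟩
    exact (hasFiniteIntegral_iff_ofReal
      (Eventually.of_forall fun x => le_max_right _ _)).mpr
      (lt_of_le_of_lt hfatou ENNReal.ofReal_lt_top)
  exact (Integrable.congr (hplus.sub hnegint) (Eventually.of_forall fun x => by
    exact max_zero_sub_eq_self (ψ x)))

/-- Lemma 2: the integral of the coboundary over an invariant set vanishes. -/
lemma invariant_integral_zero {X : Type*} [MeasurableSpace X] {μ : MeasureTheory.Measure X}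
    [IsProbabilityMeasure μ] {f : X → X} {φ : X → ℝ}
    (hf : Measurable f) (hpres : MeasurePreserving f μ μ) (hφ : Measurable φ)
    (hψint : Integrable (fun x => φ (f x) - φ x) μ)
    {E : Set X} (hE : MeasurableSet E) (hinv : f ⁻¹' E = E) :
    ∫ x in E, (φ (f x) - φ x) ∂μ = 0 := by
  set ψ := fun x => φ (f x) - φ x with hψ
  have hmemf : ∀ x, f x ∈ E ↔ x ∈ E := by
    intro x
    constructor
    · intro h; rw [← hinv]; exact h
    · intro h; rw [← hinv] at h; exact h
  set d := fun (M : ℕ) (x : X) => trunc M (φ (f x)) - trunc M (φ x) with hd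
  set F := fun (M : ℕ) (x : X) => E.indicator (d M) x with hF
  set u := fun (M : ℕ) (x : X) => E.indicator (fun y => trunc M (φ y)) x with hu
  have hum : ∀ M, Measurable (u M) := fun M => ((trunc_measurable M).comp hφ).indicator hE
  have hub : ∀ M, Integrable (u M) μ := by
    intro M
    apply Integrable.mono' (integrable_const (M : ℝ)) (hum M).aestronglyMeasurable
    refine Eventually.of_forall (fun x => ?_)
    by_cases hx : x ∈ E
    · simp only [hu, Set.indicator_of_mem hx, Real.norm_eq_abs]
      exact abs_trunc_le M (φ x)
    · simp [hu, Set.indicator_of_notMem hx]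
  have hFeq : ∀ M x, F M x = u M (f x) - u M x := by
    intro M x
    by_cases hx : x ∈ E
    · have hfx : f x ∈ E := (hmemf x).mpr hx
      simp [hF, hu, Set.indicator_of_mem hx, Set.indicator_of_mem hfx, hd]
    · have hfx : f x ∉ E := fun h => hx ((hmemf x).mp h)
      simp [hF, hu, Set.indicator_of_notMem hx, Set.indicator_of_notMem hfx]
  have hFzero : ∀ M, ∫ x, F M x ∂μ = 0 := by
    intro M
    have hucomp : Integrable (fun x => u M (f x)) μ := (hpres.integrable_comp (hub M).1).mpr (hub M)
    calc ∫ x, F M x ∂μ = ∫ x, (u M (f x) - u M x) ∂μ := by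
          apply integral_congr_ae (Eventually.of_forall (hFeq M))
      _ = 0 := by rw [integral_sub hucomp (hub M), integral_comp_mp hpres (hub M).1, sub_self]
  have hFm : ∀ M, AEStronglyMeasurable (F M) μ := by
    intro M
    exact ((((trunc_measurable M).comp (hφ.comp hf)).sub
      ((trunc_measurable M).comp hφ)).indicator hE).aestronglyMeasurable
  have hbound : ∀ M, ∀ᵐ x ∂μ, ‖F M x‖ ≤ |ψ x| := by
    intro M
    refine Eventually.of_forall (fun x => ?_)
    by_cases hx : x ∈ E
    · simp only [hF, Set.indicator_of_mem hx, Real.norm_eq_abs]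
      exact abs_trunc_sub_trunc M _ _
    · simp only [hF, Set.indicator_of_notMem hx, Real.norm_eq_abs, norm_zero]
      positivity
  have hptw : ∀ᵐ x ∂μ, Tendsto (fun M => F M x) atTop (nhds (E.indicator ψ x)) := by
    refine Eventually.of_forall (fun x => ?_)
    apply tendsto_atTop_of_eventually_const (i₀ := ⌈max |φ x| |φ (f x)|⌉₊)
    intro M hM
    have h1 : |φ x| ≤ M := le_trans (le_max_left _ _) (le_trans (Nat.le_ceil _) (by exact_mod_cast hM))
    have h2 : |φ (f x)| ≤ M := le_trans (le_max_right _ _) (le_trans (Nat.le_ceil _) (by exact_mod_cast hM))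
    have : d M x = ψ x := by simp [hd, trunc_eq M _ h1, trunc_eq M _ h2, hψ]
    by_cases hx : x ∈ E
    · simp [hF, Set.indicator_of_mem hx, this]
    · simp [hF, Set.indicator_of_notMem hx]
  have hlim : Tendsto (fun M => ∫ x, F M x ∂μ) atTop (nhds (∫ x, E.indicator ψ x ∂μ)) :=
    tendsto_integral_of_dominated_convergence (fun x => |ψ x|) hFm hψint.abs hbound hptw
  have : ∫ x, E.indicator ψ x ∂μ = 0 :=
    tendsto_nhds_unique (by simpa [hFzero] using hlim : Tendsto (fun _ : ℕ => (0:ℝ)) atTop _) tendsto_const_nhds |>.symm ▸ rfl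
  rw [← integral_indicator hE]
  exact tendsto_nhds_unique ((tendsto_congr (fun M => (hFzero M))).mp hlim) tendsto_const_nhds

lemma onesided {X : Type*} [MeasurableSpace X] {μ : MeasureTheory.Measure X}
    [IsProbabilityMeasure μ] {f : X → X} {φ : X → ℝ}
    (hf : Measurable f) (hpres : MeasurePreserving f μ μ) (hφ : Measurable φ)
    (hψint : Integrable (fun x => φ (f x) - φ x) μ) :
    ∀ᵐ x ∂μ, ∀ ε : ℝ, 0 < ε → ∀ᶠ n : ℕ in atTop, φ (f^[n] x) - φ x ≤ ε * n := by
  set ψ := fun x => φ (f x) - φ x with hψdef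
  have hψm : Measurable ψ := (hφ.comp hf).sub hφ
  set Eset : ℚ → Set X := fun α =>
    ⋃ (q : ℚ) (_ : α < q), ⋂ (N : ℕ), ⋃ (k : ℕ) (_ : N ≤ k), {x | (q:ℝ) * k < Sb f ψ k x}
    with hEdef
  have hmem : ∀ (α : ℚ) (x : X), x ∈ Eset α ↔
      ∃ q : ℚ, α < q ∧ ∀ N : ℕ, ∃ k, N ≤ k ∧ (q:ℝ) * k < Sb f ψ k x := by
    intro α x
    simp only [hEdef, Set.mem_iUnion, Set.mem_iInter, Set.mem_setOf_eq, exists_prop]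
  have hmeasE : ∀ α : ℚ, MeasurableSet (Eset α) := by
    intro α
    refine MeasurableSet.iUnion (fun q => MeasurableSet.iUnion (fun _ =>
      MeasurableSet.iInter (fun N => MeasurableSet.iUnion (fun k =>
        MeasurableSet.iUnion (fun _ => ?_)))))
    exact measurableSet_lt measurable_const (Sb_measurable hf hψm k)
  have hinvE : ∀ α : ℚ, f ⁻¹' (Eset α) = Eset α := by
    intro α
    ext x
    rw [Set.mem_preimage, hmem, hmem]
    constructor
    · -- f x ∈ E → x ∈ E
      rintro ⟨q, hq, hfr⟩
      have hq2 : ((α:ℝ) + q) / 2 < (q:ℝ) := by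
        have : (α:ℝ) < q := by exact_mod_cast hq
        linarith
      refine ⟨(α + q) / 2, by linarith, fun N => ?_⟩
      set q' : ℚ := (α + q) / 2 with hq'
      have hq'R : (q':ℝ) = ((α:ℝ) + q) / 2 := by push_cast [hq']; ring
      have hpos : (0:ℝ) < (q:ℝ) - q' := by rw [hq'R]; linarith
      set K := ⌈((q':ℝ) - ψ x) / ((q:ℝ) - q')⌉₊ with hK
      obtain ⟨k, hk, hSk⟩ := hfr (max N K)
      refine ⟨k + 1, le_trans (le_trans (le_max_left N K) hk) (Nat.le_succ k), ?_⟩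
      have hKk : (q':ℝ) - ψ x ≤ ((q:ℝ) - q') * k := by
        have h1 : ((q':ℝ) - ψ x) / ((q:ℝ) - q') ≤ K := Nat.le_ceil _
        rw [div_le_iff₀ hpos] at h1
        have h2 : (K:ℝ) ≤ k := by exact_mod_cast le_trans (le_max_right N K) hk
        nlinarith
      rw [Sb_succ']
      push_cast
      nlinarith [hSk]
    · -- x ∈ E → f x ∈ E
      rintro ⟨q, hq, hfr⟩
      have hαq : (α:ℝ) < q := by exact_mod_cast hq
      refine ⟨(α + q) / 2, by linarith, fun N => ?_⟩
      set q' : ℚ := (α + q) / 2 with hq'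
      have hq'R : (q':ℝ) = ((α:ℝ) + q) / 2 := by push_cast [hq']; ring
      have hpos : (0:ℝ) < (q:ℝ) - q' := by rw [hq'R]; linarith
      set K := ⌈(ψ x - (q:ℝ)) / ((q:ℝ) - q')⌉₊ with hK
      obtain ⟨k, hk, hSk⟩ := hfr (max (N + 1) (K + 1))
      have hk1 : 1 ≤ k := le_trans (le_trans (Nat.le_add_left 1 N) (le_max_left _ _)) hk
      have hkN : N + 1 ≤ k := le_trans (le_max_left _ _) hk
      have hkK : K + 1 ≤ k := le_trans (le_max_right _ _) hk
      refine ⟨k - 1, by omega, ?_⟩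
      set j := k - 1 with hj
      have hjk : k = j + 1 := by omega
      rw [hjk, Sb_succ'] at hSk
      have hKj : ψ x - (q:ℝ) ≤ ((q:ℝ) - q') * j := by
        have h1 : (ψ x - (q:ℝ)) / ((q:ℝ) - q') ≤ K := Nat.le_ceil _
        rw [div_le_iff₀ hpos] at h1
        have h2 : (K:ℝ) ≤ j := by
          have : K ≤ j := by omega
          exact_mod_cast this
        nlinarith
      push_cast at hSk
      nlinarith [hSk]
  -- measure zero
  have hEzero : ∀ α : ℚ, 0 < α → μ (Eset α) = 0 := by
    intro α hα
    have hαR : (0:ℝ) < (α:ℝ) := by exact_mod_cast hα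
    set E := Eset α with hEset
    have hE : MeasurableSet E := hmeasE α
    have hinv : f ⁻¹' E = E := hinvE α
    have hmemf : ∀ y, y ∈ E → f y ∈ E := by
      intro y hy; rw [← hinv] at hy; exact hy
    set h := E.indicator (fun x => ψ x - (α:ℝ)) with hhdef
    have hm : Measurable h := (hψm.sub measurable_const).indicator hE
    have hintg : Integrable h μ := (hψint.sub (integrable_const _)).indicator hE
    have horbit : ∀ x ∈ E, ∀ i : ℕ, f^[i] x ∈ E := by
      intro x hx i
      induction i with
      | zero => exact hx
      | succ i ih => rw [Function.iterate_succ_apply']; exact hmemf _ ih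
    have hSbh : ∀ x ∈ E, ∀ k : ℕ, Sb f h k x = Sb f ψ k x - (α:ℝ) * k := by
      intro x hx k
      unfold Sb
      have : ∀ i ∈ Finset.range k, h (f^[i] x) = ψ (f^[i] x) - (α:ℝ) := by
        intro i _
        exact Set.indicator_of_mem (horbit x hx i) _
      rw [Finset.sum_congr rfl this, Finset.sum_sub_distrib, Finset.sum_const,
        Finset.card_range, nsmul_eq_mul, mul_comm]
    have hMzero : ∀ n : ℕ, ∀ x, x ∉ E → Mx f h n x = 0 := by
      intro n
      induction n with
      | zero => intro x _; rfl
      | succ n ih =>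
          intro x hx
          have hfx : f x ∉ E := by
            intro hc
            exact hx (by rw [← hinv]; exact hc)
          show max (h x + Mx f h n (f x)) 0 = 0
          have hx0 : h x = 0 := Set.indicator_of_notMem hx _
          rw [hx0, ih (f x) hfx]
          simp
    set G : ℕ → Set X := fun n => {x | 0 < Mx f h n x} with hGdef
    have hGm : ∀ n, MeasurableSet (G n) :=
      fun n => measurableSet_lt measurable_const (Mx_measurable hf hm n)
    have hGE : ∀ n, G n ⊆ E := by
      intro n x hx
      by_contra hc
      rw [Set.mem_setOf_eq, hMzero n x hc] at hx
      exact lt_irrefl 0 hx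
    have hEG : E ⊆ ⋃ n, G n := by
      intro x hx
      obtain ⟨q, hq, hfr⟩ := (hmem α x).mp hx
      obtain ⟨k, hk1, hSk⟩ := hfr 1
      have hαqR : (α:ℝ) < q := by exact_mod_cast hq
      have hkR : (1:ℝ) ≤ k := by exact_mod_cast hk1
      have hpos : 0 < Sb f h k x := by
        rw [hSbh x hx k]
        nlinarith
      refine Set.mem_iUnion.mpr ⟨k, ?_⟩
      exact lt_of_lt_of_le hpos (Sb_le_Mx k x)
    have hgar : ∀ n, 0 ≤ ∫ x in G n, h x ∂μ := fun n => garsia hf hpres hm hintg n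
    have hlim : Tendsto (fun n => ∫ x in G n, h x ∂μ) atTop (nhds (∫ x in E, h x ∂μ)) := by
      have heq : ∀ n, ∫ x in G n, h x ∂μ = ∫ x, (G n).indicator h x ∂μ :=
        fun n => (integral_indicator (hGm n)).symm
      have heqE : ∫ x in E, h x ∂μ = ∫ x, E.indicator h x ∂μ := (integral_indicator hE).symm
      rw [heqE]
      simp only [heq]
      apply tendsto_integral_of_dominated_convergence (fun x => |h x|)
        (fun n => (hm.indicator (hGm n)).aestronglyMeasurable) hintg.abs
      · intro n
        refine Eventually.of_forall (fun x => ?_)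
        by_cases hx : x ∈ G n
        · simp [Set.indicator_of_mem hx, Real.norm_eq_abs]
        · simp [Set.indicator_of_notMem hx]
      · refine Eventually.of_forall (fun x => ?_)
        by_cases hx : x ∈ E
        · rcases Set.mem_iUnion.mp (hEG hx) with ⟨k, hk⟩
          apply tendsto_atTop_of_eventually_const (i₀ := k)
          intro n hn
          have hxn : x ∈ G n := by
            rw [hGdef, Set.mem_setOf_eq]
            exact lt_of_lt_of_le hk (Mx_mono' hn x)
          rw [Set.indicator_of_mem hxn, Set.indicator_of_mem hx]
        · have : ∀ n, (G n).indicator h x = 0 :=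
            fun n => Set.indicator_of_notMem (fun hc => hx (hGE n hc)) _
          simp only [this, Set.indicator_of_notMem hx]
          exact tendsto_const_nhds
    have hge : 0 ≤ ∫ x in E, h x ∂μ := ge_of_tendsto' hlim hgar
    have hsplit : ∫ x in E, h x ∂μ = ∫ x in E, ψ x ∂μ - (α:ℝ) * (μ E).toReal := by
      have h1 : ∫ x in E, h x ∂μ = ∫ x in E, (ψ x - (α:ℝ)) ∂μ := by
        apply setIntegral_congr_fun hE
        intro x hx
        exact Set.indicator_of_mem hx _
      rw [h1, integral_sub hψint.integrableOn (integrable_const _).integrableOn,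
        setIntegral_const, smul_eq_mul, mul_comm, Measure.real]
    have hzero : ∫ x in E, ψ x ∂μ = 0 :=
      invariant_integral_zero hf hpres hφ hψint hE hinv
    rw [hsplit, hzero] at hge
    have htR : (μ E).toReal = 0 := by nlinarith [ENNReal.toReal_nonneg (a := μ E)]
    have hne : μ E ≠ ⊤ := measure_ne_top μ E
    rcases (ENNReal.toReal_eq_zero_iff _).mp htR with h0 | h0
    · exact h0
    · exact absurd h0 hne
  -- conclusion
  have hae : ∀ᵐ x ∂μ, ∀ α : ℚ, 0 < α → x ∉ Eset α := by
    rw [ae_all_iff]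
    intro α
    by_cases hα : 0 < α
    · filter_upwards [measure_eq_zero_iff_ae_notMem.mp (hEzero α hα)] with x hx _
      exact hx
    · filter_upwards with x h
      exact absurd h hα
  filter_upwards [hae] with x hx ε hε
  obtain ⟨α, hα0, hαε⟩ := exists_rat_btwn hε
  obtain ⟨q, hq1, hq2⟩ := exists_rat_btwn hαε
  have hα0' : 0 < α := by exact_mod_cast hα0
  have hαq : α < q := by exact_mod_cast hq1
  have hnot := hx α hα0'
  rw [hmem] at hnot
  push_neg at hnot
  obtain ⟨N, hN⟩ := hnot q hαq
  refine eventually_atTop.mpr ⟨N, fun n hn => ?_⟩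
  have h1 : Sb f ψ n x ≤ (q:ℝ) * n := hN n hn
  calc φ (f^[n] x) - φ x = Sb f ψ n x := (Sb_telescope f φ n x).symm
    _ ≤ (q:ℝ) * n := h1
    _ ≤ ε * n := mul_le_mul_of_nonneg_right hq2.le (Nat.cast_nonneg n)

lemma combine {c : ℝ} {a : ℕ → ℝ}
    (hup : ∀ ε : ℝ, 0 < ε → ∀ᶠ n : ℕ in atTop, a n - c ≤ ε * n)
    (hlo : ∀ ε : ℝ, 0 < ε → ∀ᶠ n : ℕ in atTop, c - a n ≤ ε * n) :
    Tendsto (fun n : ℕ => (n : ℝ)⁻¹ * a n) atTop (nhds 0) := by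
  rw [NormedAddCommGroup.tendsto_nhds_zero]
  intro ε hε
  have hq : (0:ℝ) < ε / 4 := by linarith
  have h3 : ∀ᶠ n : ℕ in atTop, (n:ℝ)⁻¹ * |c| < ε / 4 :=
    (tendsto_inv_atTop_nhds_zero_nat.mul_const |c|).eventually_lt_const (by simpa using hq)
  filter_upwards [hup _ hq, hlo _ hq, h3, eventually_ge_atTop 1] with n hu hl hc hn
  have hnpos : (0:ℝ) < n := by exact_mod_cast hn
  have hinv : (0:ℝ) ≤ (n:ℝ)⁻¹ := by positivity
  have habs : |a n| ≤ |c| + ε / 4 * n := by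
    rw [abs_le]
    constructor
    · have := neg_abs_le c
      linarith
    · have := le_abs_self c
      linarith
  have hne : (n:ℝ) ≠ 0 := ne_of_gt hnpos
  have hcalc : (n:ℝ)⁻¹ * (ε / 4 * n) = ε / 4 := by field_simp
  calc ‖(n:ℝ)⁻¹ * a n‖ = (n:ℝ)⁻¹ * |a n| := by
        rw [Real.norm_eq_abs, abs_mul, abs_of_nonneg hinv]
    _ ≤ (n:ℝ)⁻¹ * (|c| + ε / 4 * n) := by
        apply mul_le_mul_of_nonneg_left habs hinv
    _ = (n:ℝ)⁻¹ * |c| + (n:ℝ)⁻¹ * (ε / 4 * n) := by ring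
    _ = (n:ℝ)⁻¹ * |c| + ε / 4 := by rw [hcalc]
    _ < ε / 4 + ε / 4 := by linarith
    _ < ε := by linarith

end St15

end Statement15Aux

/-- Lemma 4.4 of the paper, following Walters. Let `(X, F, μ, f)` be an
invertible measure-preserving transformation of a probability space (with inverse `g`),
and let `φ : X → ℝ` be measurable such that `(φ∘f - φ)⁺` or `(φ∘f - φ)⁻` is integrable.
Then `(1/|n|) φ(fⁿ x) → 0` as `n → +∞` and as `n → -∞`, for `μ`-a.e. `x`. -/
theorem statement15 {X : Type*} [MeasurableSpace X]
    (μ : MeasureTheory.Measure X) [MeasureTheory.IsProbabilityMeasure μ]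
    (f g : X → X) (hf : Measurable f) (hg : Measurable g)
    (hgf : ∀ x, g (f x) = x) (hfg : ∀ x, f (g x) = x)
    (hpres : MeasureTheory.MeasurePreserving f μ μ)
    (φ : X → ℝ) (hφ : Measurable φ)
    (hint : MeasureTheory.Integrable (fun x => max (φ (f x) - φ x) 0) μ ∨
      MeasureTheory.Integrable (fun x => max (φ x - φ (f x)) 0) μ) :
    ∀ᵐ x ∂μ,
      Filter.Tendsto (fun n : ℕ => (n : ℝ)⁻¹ * φ (f^[n] x)) Filter.atTop (nhds 0) ∧
      Filter.Tendsto (fun n : ℕ => (n : ℝ)⁻¹ * φ (g^[n] x)) Filter.atTop (nhds 0) := by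
  have hψint : MeasureTheory.Integrable (fun x => φ (f x) - φ x) μ := by
    rcases hint with h | h
    · exact St15.integrable_cobdy hf hpres hφ h
    · have h2 : MeasureTheory.Integrable (fun x => max (-φ (f x) - -φ x) 0) μ :=
        h.congr (Filter.Eventually.of_forall fun x => by
          show (φ x - φ (f x)) ⊔ 0 = (-φ (f x) - -φ x) ⊔ 0
          rw [show -φ (f x) - -φ x = φ x - φ (f x) from by ring])
      have h3 := St15.integrable_cobdy hf hpres hφ.neg h2
      exact h3.neg.congr (Filter.Eventually.of_forall fun x => by
        simp only [Pi.neg_apply]; ring)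
  have hgpres : MeasureTheory.MeasurePreserving g μ μ := by
    refine ⟨hg, ?_⟩
    apply MeasureTheory.Measure.ext
    intro s hs
    rw [MeasureTheory.Measure.map_apply hg hs]
    have hpre : f ⁻¹' (g ⁻¹' s) = s := by
      ext y
      simp [hgf y]
    calc μ (g ⁻¹' s) = μ (f ⁻¹' (g ⁻¹' s)) :=
          (hpres.measure_preimage ((hg hs).nullMeasurableSet)).symm
      _ = μ s := by rw [hpre]
  have hψgint : MeasureTheory.Integrable (fun x => φ (g x) - φ x) μ := by
    have h1 : MeasureTheory.Integrable ((fun x => φ (f x) - φ x) ∘ g) μ :=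
      (hgpres.integrable_comp hψint.1).mpr hψint
    exact h1.neg.congr (Filter.Eventually.of_forall fun x => by
      simp only [Pi.neg_apply, Function.comp_apply, hfg x]
      ring)
  have hψnint : MeasureTheory.Integrable (fun x => -φ (f x) - -φ x) μ :=
    hψint.neg.congr (Filter.Eventually.of_forall fun x => by
      simp only [Pi.neg_apply]; ring)
  have hψgnint : MeasureTheory.Integrable (fun x => -φ (g x) - -φ x) μ :=
    hψgint.neg.congr (Filter.Eventually.of_forall fun x => by
      simp only [Pi.neg_apply]; ring)
  have A1 := St15.onesided hf hpres hφ hψint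
  have A2 := St15.onesided hf hpres hφ.neg hψnint
  have A3 := St15.onesided hg hgpres hφ hψgint
  have A4 := St15.onesided hg hgpres hφ.neg hψgnint
  filter_upwards [A1, A2, A3, A4] with x h1 h2 h3 h4
  constructor
  · apply St15.combine (c := φ x) (fun ε hε => h1 ε hε)
    intro ε hε
    filter_upwards [h2 ε hε] with n hn
    have : -φ (f^[n] x) - -φ x ≤ ε * n := hn
    linarith
  · apply St15.combine (c := φ x) (fun ε hε => h3 ε hε)
    intro ε hε
    filter_upwards [h4 ε hε] with n hn
    have : -φ (g^[n] x) - -φ x ≤ ε * n := hn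
    linarith
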